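/- Suppose no SCC of the dependence graph of A is super-critical, and let S be a critical SCC such that no critical SCC T with T ≠ S is downstream of S. Then there exists a nonnegative fixed point m of A such that for every vertex i: m i > 0 if and only if some vertex of S reaches i. In particular, m is strictly positive on S and on every vertex reachable from S, and zero elsewhere. -/

import Mathlib

open Matrix Filter Topology Polynomial

attribute [local instance] Classical.propDecidable

/-- There is a directed edge from `a` to `b` in the dependence graph `G(A)`:
an edge from `j` to `i` whenever `i ≠ j` and `A i j ≠ 0`. -/
def Edge {n : ℕ} (A : Matrix (Fin n) (Fin n) ℝ) (a b : Fin n) : Prop :=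
  a ≠ b ∧ A b a ≠ 0

/-- `i` reaches `j`: reflexive–transitive closure of the edge relation. -/
def Reaches {n : ℕ} (A : Matrix (Fin n) (Fin n) ℝ) : Fin n → Fin n → Prop :=
  Relation.ReflTransGen (Edge A)

/-- Mutual reachability. -/
def Mutual {n : ℕ} (A : Matrix (Fin n) (Fin n) ℝ) (i j : Fin n) : Prop :=
  Reaches A i j ∧ Reaches A j i

/-- `S` is a strongly connected component of `G(A)`:
an equivalence class of the mutual-reachability relation. -/
def IsSCC {n : ℕ} (A : Matrix (Fin n) (Fin n) ℝ) (S : Set (Fin n)) : Prop :=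
  ∃ i : Fin n, S = {j | Mutual A i j}

/-- The block `A_S`: the principal submatrix of `A` on rows and columns indexed by `S`. -/
def block {n : ℕ} (A : Matrix (Fin n) (Fin n) ℝ) (S : Set (Fin n)) : Matrix S S ℝ :=
  A.submatrix Subtype.val Subtype.val

/-- The eigenvalues of a real square matrix: complex roots of its characteristic polynomial. -/
def IsEigenvalue {m : Type*} [Fintype m] [DecidableEq m]
    (M : Matrix m m ℝ) (z : ℂ) : Prop :=
  ((M.charpoly).map (algebraMap ℝ ℂ)).IsRoot z

/-- `A` is a Metzler matrix. -/
def Metzler {n : ℕ} (A : Matrix (Fin n) (Fin n) ℝ) : Prop :=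
  ∀ i j, i ≠ j → 0 ≤ A i j

/-- `S` is sub-critical: every eigenvalue of `A_S` has negative real part. -/
def SubCritical {n : ℕ} (A : Matrix (Fin n) (Fin n) ℝ) (S : Set (Fin n)) : Prop :=
  ∀ z : ℂ, IsEigenvalue (block A S) z → z.re < 0

/-- `S` is critical: `0` is an eigenvalue of `A_S` and all eigenvalues of `A_S` have
nonpositive real part. -/
def Critical {n : ℕ} (A : Matrix (Fin n) (Fin n) ℝ) (S : Set (Fin n)) : Prop :=
  IsEigenvalue (block A S) 0 ∧ ∀ z : ℂ, IsEigenvalue (block A S) z → z.re ≤ 0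

/-- `S` is super-critical: `A_S` has an eigenvalue with positive real part. -/
def SuperCritical {n : ℕ} (A : Matrix (Fin n) (Fin n) ℝ) (S : Set (Fin n)) : Prop :=
  ∃ z : ℂ, IsEigenvalue (block A S) z ∧ 0 < z.re

/-- `m` is a nonnegative fixed point of `A`. -/
def NonnegFixedPoint {n : ℕ} (A : Matrix (Fin n) (Fin n) ℝ) (m : Fin n → ℝ) : Prop :=
  (∀ i, 0 ≤ m i) ∧ A *ᵥ m = 0

/-- `S` is trivial: every nonnegative fixed point vanishes on every vertex of `S`. -/
def TrivialSCC {n : ℕ} (A : Matrix (Fin n) (Fin n) ℝ) (S : Set (Fin n)) : Prop :=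
  ∀ m : Fin n → ℝ, NonnegFixedPoint A m → ∀ i ∈ S, m i = 0

/-- `S` is upstream of `T` (and `T` downstream of `S`). -/
def Upstream {n : ℕ} (A : Matrix (Fin n) (Fin n) ℝ) (S T : Set (Fin n)) : Prop :=
  ∃ i ∈ S, ∃ j ∈ T, Reaches A i j

/-- `S` is immediately upstream of `T`. -/
def ImmediatelyUpstream {n : ℕ} (A : Matrix (Fin n) (Fin n) ℝ) (S T : Set (Fin n)) : Prop :=
  S ≠ T ∧ ∃ i ∈ S, ∃ j ∈ T, Edge A i j

/-- The matrix exponential `exp M = ∑ M^k / k!`. -/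
noncomputable def mexp {n : ℕ} (M : Matrix (Fin n) (Fin n) ℝ) : Matrix (Fin n) (Fin n) ℝ :=
  ∑' k : ℕ, ((k.factorial : ℝ)⁻¹) • M ^ k

set_option maxHeartbeats 1600000

section AuxSpectral

variable {m : Type*} [Fintype m] [DecidableEq m]

lemma eval_charpoly' {R : Type*} [CommRing R] (M : Matrix m m R) (x : R) :
    (M.charpoly).eval x = (x • (1 : Matrix m m R) - M).det := by
  rw [Matrix.charpoly, ← Polynomial.coe_evalRingHom, RingHom.map_det]
  congr 1
  ext i j
  by_cases h : i = j
  · subst h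
    simp [Matrix.charmatrix_apply_eq, Matrix.one_apply]
  · simp [Matrix.charmatrix_apply_ne _ _ _ h, Matrix.one_apply, h]

lemma isEigenvalue_iff_det (M : Matrix m m ℝ) (z : ℂ) :
    IsEigenvalue M z ↔ (z • (1 : Matrix m m ℂ) - M.map (algebraMap ℝ ℂ)).det = 0 := by
  rw [IsEigenvalue, Polynomial.IsRoot, ← Matrix.charpoly_map, eval_charpoly']

lemma isEigenvalue_iff_exists (M : Matrix m m ℝ) (z : ℂ) :
    IsEigenvalue M z ↔ ∃ v : m → ℂ, v ≠ 0 ∧ (M.map (algebraMap ℝ ℂ)) *ᵥ v = z • v := by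
  rw [isEigenvalue_iff_det, ← Matrix.exists_mulVec_eq_zero_iff]
  constructor
  · rintro ⟨v, hv, h⟩
    refine ⟨v, hv, ?_⟩
    have := h
    rw [Matrix.sub_mulVec, Matrix.smul_mulVec, Matrix.one_mulVec, sub_eq_zero] at this
    exact this.symm
  · rintro ⟨v, hv, h⟩
    refine ⟨v, hv, ?_⟩
    rw [Matrix.sub_mulVec, Matrix.smul_mulVec, Matrix.one_mulVec, sub_eq_zero, h]

lemma isEigenvalue_of_real_vec (M : Matrix m m ℝ) (r : ℝ) (v : m → ℝ) (hv : v ≠ 0)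
    (h : M *ᵥ v = r • v) : IsEigenvalue M (r : ℂ) := by
  rw [isEigenvalue_iff_exists]
  refine ⟨fun i => (v i : ℂ), ?_, ?_⟩
  · intro hz
    apply hv
    funext i
    have := congrFun hz i
    simpa using this
  · funext i
    have := congrFun h i
    simp only [Matrix.mulVec, dotProduct, Pi.smul_apply, smul_eq_mul] at this ⊢
    simp only [Matrix.map_apply, Complex.coe_algebraMap]
    exact_mod_cast congrArg Complex.ofReal this

-- eigenvalue shift
lemma isEigenvalue_add_smul_one (M : Matrix m m ℝ) (c : ℝ) (z : ℂ) :
    IsEigenvalue (M + c • 1) z ↔ IsEigenvalue M (z - c) := by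
  rw [isEigenvalue_iff_det, isEigenvalue_iff_det]
  have : z • (1 : Matrix m m ℂ) - (M + c • (1:Matrix m m ℝ)).map (algebraMap ℝ ℂ)
      = (z - c) • (1 : Matrix m m ℂ) - M.map (algebraMap ℝ ℂ) := by
    ext i j
    by_cases h : i = j <;>
      simp [Matrix.map_apply, Matrix.one_apply, h, sub_smul] <;> ring
  rw [this]

def MNonneg (P : Matrix m m ℝ) : Prop := ∀ i j, 0 ≤ P i j

lemma MNonneg.mul {P Q : Matrix m m ℝ} (hP : MNonneg P) (hQ : MNonneg Q) :
    MNonneg (P * Q) := fun i j => by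
  rw [Matrix.mul_apply]
  exact Finset.sum_nonneg fun k _ => mul_nonneg (hP i k) (hQ k j)

lemma MNonneg.pow {P : Matrix m m ℝ} (hP : MNonneg P) (k : ℕ) : MNonneg (P ^ k) := by
  induction k with
  | zero => intro i j; by_cases h : i = j <;> simp [h, Matrix.one_apply]
  | succ k ih => rw [pow_succ]; exact ih.mul hP

lemma MNonneg.mulVec_nonneg {P : Matrix m m ℝ} (hP : MNonneg P) {v : m → ℝ}
    (hv : ∀ i, 0 ≤ v i) (i : m) : 0 ≤ (P *ᵥ v) i :=
  Finset.sum_nonneg fun j _ => mul_nonneg (hP i j) (hv j)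

lemma MNonneg.mulVec_le {P : Matrix m m ℝ} (hP : MNonneg P) {v : m → ℝ}
    (hv : ∀ i, 0 ≤ v i) (i j : m) : P i j * v j ≤ (P *ᵥ v) i := by
  apply Finset.single_le_sum (f := fun j => P i j * v j)
    (fun k _ => mul_nonneg (hP i k) (hv k)) (Finset.mem_univ j)

/-- entry of P^(k+1) bounded below by a product through an intermediate entry -/
lemma pow_entry_succ_ge {P : Matrix m m ℝ} (hP : MNonneg P) (k : ℕ) (a b c : m) :
    P c b * (P ^ k) b a ≤ (P ^ (k+1)) c a := by
  rw [pow_succ', Matrix.mul_apply]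
  exact Finset.single_le_sum (f := fun x => P c x * (P ^ k) x a)
    (fun x _ => mul_nonneg (hP c x) ((hP.pow k) x a)) (Finset.mem_univ b)

lemma pow_entry_mono {P : Matrix m m ℝ} (hP : MNonneg P) (hdiag : ∀ i, 0 < P i i)
    {k : ℕ} {a c : m} (h : 0 < (P ^ k) c a) : 0 < (P ^ (k+1)) c a :=
  lt_of_lt_of_le (mul_pos (hdiag c) h) (pow_entry_succ_ge hP k a c c)

lemma pow_entry_mono' {P : Matrix m m ℝ} (hP : MNonneg P) (hdiag : ∀ i, 0 < P i i)
    {k K : ℕ} (hkK : k ≤ K) {a c : m} (h : 0 < (P ^ k) c a) : 0 < (P ^ K) c a := by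
  induction K with
  | zero => simpa [Nat.le_zero.mp hkK] using h
  | succ K ih =>
    rcases Nat.lt_or_ge k (K+1) with h' | h'
    · exact pow_entry_mono hP hdiag (ih (Nat.lt_succ_iff.mp h'))
    · have : k = K + 1 := le_antisymm hkK h'
      subst this; exact h

lemma path_pow_pos {P : Matrix m m ℝ} (hP : MNonneg P) (hdiag : ∀ i, 0 < P i i)
    {a b : m} (h : Relation.ReflTransGen (fun x y => 0 < P y x) a b) :
    ∃ k, 0 < (P ^ k) b a := by
  induction h with
  | refl => exact ⟨0, by simp⟩
  | tail hst hedge ih =>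
    obtain ⟨k, hk⟩ := ih
    exact ⟨k + 1, lt_of_lt_of_le (mul_pos hedge hk) (pow_entry_succ_ge hP k a _ _)⟩

lemma exists_uniform_pow_pos {P : Matrix m m ℝ} (hP : MNonneg P) (hdiag : ∀ i, 0 < P i i)
    (h : ∀ i j : m, ∃ k, 0 < (P ^ k) i j) [Nonempty m] :
    ∃ K, ∀ i j : m, 0 < (P ^ K) i j := by
  choose f hf using h
  refine ⟨Finset.univ.sup (fun p : m × m => f p.1 p.2), fun i j => ?_⟩
  exact pow_entry_mono' hP hdiag
    (Finset.le_sup (f := fun p : m × m => f p.1 p.2) (Finset.mem_univ (i, j))) (hf i j)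

lemma perron_frobenius [Nonempty m] (N : Matrix m m ℝ) (hN : MNonneg N)
    (hprim : ∀ i j : m, ∃ k, 0 < (((1 : Matrix m m ℝ) + N) ^ k) i j) :
    ∃ (r : ℝ) (v : m → ℝ), 0 ≤ r ∧ (∀ i, 0 < v i) ∧ N *ᵥ v = r • v ∧
      ∀ z : ℂ, IsEigenvalue N z → ‖z‖ ≤ r := by
  classical
  set B : ℝ := ∑ i, ∑ j, N i j with hB
  set K : Set (ℝ × (m → ℝ)) :=
    {p | (∀ i, 0 ≤ p.2 i) ∧ (∑ i, p.2 i) = 1 ∧ 0 ≤ p.1 ∧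
      ∀ i, p.1 * p.2 i ≤ ∑ j, N i j * p.2 j} with hK
  -- closedness
  have hKclosed : IsClosed K := by
    have h1 : K = (⋂ i, {p : ℝ × (m → ℝ) | 0 ≤ p.2 i}) ∩
        ({p : ℝ × (m → ℝ) | ∑ i, p.2 i = 1} ∩ ({p : ℝ × (m → ℝ) | 0 ≤ p.1} ∩
          ⋂ i, {p : ℝ × (m → ℝ) | p.1 * p.2 i ≤ ∑ j, N i j * p.2 j})) := by
      ext p
      simp only [hK, Set.mem_setOf_eq, Set.mem_inter_iff, Set.mem_iInter]
    rw [h1]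
    have hc1 : Continuous fun p : ℝ × (m → ℝ) => ∑ i, p.2 i :=
      continuous_finset_sum _ fun i _ => (continuous_apply i).comp continuous_snd
    refine (isClosed_iInter fun i =>
        isClosed_le continuous_const ((continuous_apply i).comp continuous_snd)).inter
      ((isClosed_eq hc1 continuous_const).inter
        ((isClosed_le continuous_const continuous_fst).inter
          (isClosed_iInter fun i => isClosed_le
            (continuous_fst.mul ((continuous_apply i).comp continuous_snd))
            (continuous_finset_sum _ fun j _ =>
              continuous_const.mul ((continuous_apply j).comp continuous_snd)))))
  -- compactness
  have hsub : K ⊆ (Set.Icc 0 B) ×ˢ (Set.pi Set.univ fun _ : m => Set.Icc (0:ℝ) 1) := by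
    rintro p ⟨h0, h1, h2, h3⟩
    have hx1 : ∀ j, p.2 j ≤ 1 := fun j =>
      h1 ▸ Finset.single_le_sum (fun i _ => h0 i) (Finset.mem_univ j)
    constructor
    · refine ⟨h2, ?_⟩
      calc p.1 = ∑ i, p.1 * p.2 i := by rw [← Finset.mul_sum, h1, mul_one]
        _ ≤ ∑ i, ∑ j, N i j * p.2 j := Finset.sum_le_sum fun i _ => h3 i
        _ ≤ B := Finset.sum_le_sum fun i _ => Finset.sum_le_sum fun j _ =>
            mul_le_of_le_one_right (hN i j) (hx1 j)
    · exact fun j _ => ⟨h0 j, hx1 j⟩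
  have hKcompact : IsCompact K :=
    ((isCompact_Icc).prod (isCompact_univ_pi fun _ => isCompact_Icc)).of_isClosed_subset
      hKclosed hsub
  have hcard : (0:ℝ) < (Fintype.card m : ℝ) := by
    exact_mod_cast Fintype.card_pos
  have hKne : K.Nonempty := by
    refine ⟨(0, fun _ => (Fintype.card m : ℝ)⁻¹), fun i => by positivity, ?_, le_refl 0,
      fun i => ?_⟩
    · simp [Finset.sum_const, nsmul_eq_mul]
    · simp only [zero_mul]
      exact Finset.sum_nonneg fun j _ => mul_nonneg (hN i j) (by positivity)
  obtain ⟨p, hpK, hpmax⟩ := hKcompact.exists_isMaxOn hKne continuous_fst.continuousOn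
  obtain ⟨hx0, hx1, hr0, hfix⟩ := hpK
  set r := p.1 with hrdef
  set x := p.2 with hxdef
  -- the CW upper bound helper
  have hmem : ∀ (t : ℝ) (w : m → ℝ), 0 ≤ t → (∀ i, 0 ≤ w i) → (∑ i, w i) ≠ 0 →
      (∀ i, t * w i ≤ ∑ j, N i j * w j) → t ≤ r := by
    intro t w ht hw hsum hle
    have hspos : 0 < ∑ i, w i :=
      lt_of_le_of_ne (Finset.sum_nonneg fun i _ => hw i) (Ne.symm hsum)
    have hmemK : (t, (∑ i, w i)⁻¹ • w) ∈ K := by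
      refine ⟨fun i => mul_nonneg (inv_nonneg.mpr hspos.le) (hw i), ?_, ht, fun i => ?_⟩
      · simp only [Pi.smul_apply, smul_eq_mul]
        rw [← Finset.mul_sum, inv_mul_cancel₀ hspos.ne']
      · simp only [Pi.smul_apply, smul_eq_mul]
        have : ∑ j, N i j * ((∑ i, w i)⁻¹ * w j) = (∑ i, w i)⁻¹ * ∑ j, N i j * w j := by
          rw [Finset.mul_sum]
          exact Finset.sum_congr rfl fun j _ => by ring
        rw [this, show t * ((∑ i, w i)⁻¹ * w i) = (∑ i, w i)⁻¹ * (t * w i) by ring]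
        exact mul_le_mul_of_nonneg_left (hle i) (inv_nonneg.mpr hspos.le)
    exact hpmax hmemK
  -- primitive power Q
  set P : Matrix m m ℝ := 1 + N with hPdef
  have hPnn : MNonneg P := by
    intro i j
    rcases eq_or_ne i j with h | h
    · subst h
      simp only [hPdef, Matrix.add_apply, Matrix.one_apply_eq]
      exact add_nonneg zero_le_one (hN i i)
    · simp only [hPdef, Matrix.add_apply, Matrix.one_apply_ne h, zero_add]
      exact hN i j
  have hPdiag : ∀ i, 0 < P i i := by
    intro i
    simp only [hPdef, Matrix.add_apply, Matrix.one_apply_eq]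
    exact lt_of_lt_of_le zero_lt_one (le_add_of_nonneg_right (hN i i))
  obtain ⟨K₀, hK₀⟩ := exists_uniform_pow_pos hPnn hPdiag hprim
  set Q := P ^ K₀ with hQdef
  have hQpos : ∀ i j, 0 < Q i j := hK₀
  have hQnn : MNonneg Q := fun i j => (hQpos i j).le
  have hcomm : N * Q = Q * N :=
    (((Commute.one_right N).add_right (Commute.refl N)).pow_right K₀).eq
  have hQmul : ∀ (w : m → ℝ), (∀ i, 0 ≤ w i) → (∃ j, w j ≠ 0) → ∀ i, 0 < (Q *ᵥ w) i := by
    rintro w hw ⟨j, hj⟩ i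
    exact lt_of_lt_of_le (mul_pos (hQpos i j) (lt_of_le_of_ne (hw j) (Ne.symm hj)))
      (hQnn.mulVec_le hw i j)
  have hxex : ∃ j, x j ≠ 0 := by
    by_contra hcon
    push_neg at hcon
    rw [Finset.sum_congr rfl (fun j _ => hcon j)] at hx1
    simp at hx1
  have heq : N *ᵥ x = r • x := by
    by_contra hne
    set u : m → ℝ := fun i => (∑ j, N i j * x j) - r * x i with hu
    have hu0 : ∀ i, 0 ≤ u i := fun i => sub_nonneg.mpr (hfix i)
    have huex : ∃ i, u i ≠ 0 := by
      by_contra hcon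
      push_neg at hcon
      apply hne
      funext i
      have h2 : (∑ j, N i j * x j) = r * x i := by
        have := hcon i
        simp only [hu, sub_eq_zero] at this
        exact this
      show (N *ᵥ x) i = (r • x) i
      simpa [Matrix.mulVec, dotProduct] using h2
    have hy : ∀ i, 0 < (Q *ᵥ x) i := hQmul x hx0 hxex
    have hQu : ∀ i, 0 < (Q *ᵥ u) i := hQmul u hu0 huex
    have hNx : N *ᵥ x = u + r • x := by
      funext i
      simp only [hu, Pi.add_apply, Pi.smul_apply, smul_eq_mul]
      simp [Matrix.mulVec, dotProduct]
    have hNy : N *ᵥ (Q *ᵥ x) = Q *ᵥ u + r • (Q *ᵥ x) := by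
      have h3 : N *ᵥ (Q *ᵥ x) = Q *ᵥ (N *ᵥ x) := by
        rw [Matrix.mulVec_mulVec, hcomm, ← Matrix.mulVec_mulVec]
      rw [h3, hNx, Matrix.mulVec_add, Matrix.mulVec_smul]
    set δ := Finset.univ.inf' Finset.univ_nonempty (fun i => (Q *ᵥ u) i / (Q *ᵥ x) i) with hδ
    have hδpos : 0 < δ := by
      rw [hδ, Finset.lt_inf'_iff]
      exact fun i _ => div_pos (hQu i) (hy i)
    have hδle : ∀ i, δ * (Q *ᵥ x) i ≤ (Q *ᵥ u) i := by
      intro i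
      exact (le_div_iff₀ (hy i)).mp (Finset.inf'_le _ (Finset.mem_univ i))
    have hcontr : r + δ ≤ r := by
      refine hmem (r + δ) (Q *ᵥ x) (add_nonneg hr0 hδpos.le) (fun i => (hy i).le)
        (Finset.sum_pos (fun i _ => hy i) Finset.univ_nonempty).ne' (fun i => ?_)
      have h4 : (N *ᵥ (Q *ᵥ x)) i = (Q *ᵥ u) i + r * (Q *ᵥ x) i := by
        rw [hNy]; simp
      have h5 : (N *ᵥ (Q *ᵥ x)) i = ∑ j, N i j * (Q *ᵥ x) j := by
        simp [Matrix.mulVec, dotProduct]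
      nlinarith [hδle i]
    linarith
  refine ⟨r, Q *ᵥ x, hr0, hQmul x hx0 hxex, ?_, ?_⟩
  · rw [Matrix.mulVec_mulVec, hcomm, ← Matrix.mulVec_mulVec, heq, Matrix.mulVec_smul]
  · intro z hz
    obtain ⟨v, hv, hMv⟩ := (isEigenvalue_iff_exists N z).mp hz
    set w : m → ℝ := fun i => ‖v i‖ with hw
    obtain ⟨i₁, hi₁⟩ : ∃ i, v i ≠ 0 := by
      by_contra hcon
      push_neg at hcon
      exact hv (funext hcon)
    have hwpos : 0 < w i₁ := by simpa [hw] using hi₁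
    refine hmem ‖z‖ w (norm_nonneg z) (fun i => norm_nonneg _)
      (Finset.sum_pos' (fun i _ => norm_nonneg _) ⟨i₁, Finset.mem_univ _, hwpos⟩).ne'
      (fun i => ?_)
    have h1 : z * v i = ∑ j, ((N i j : ℝ):ℂ) * v j := by
      have := congrFun hMv i
      simp only [Matrix.mulVec, dotProduct, Pi.smul_apply, smul_eq_mul,
        Matrix.map_apply, Complex.coe_algebraMap] at this
      exact this.symm
    calc ‖z‖ * w i = ‖z * v i‖ := by rw [norm_mul]
      _ = ‖∑ j, ((N i j : ℝ):ℂ) * v j‖ := by rw [h1]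
      _ ≤ ∑ j, ‖((N i j : ℝ):ℂ) * v j‖ := norm_sum_le _ _
      _ = ∑ j, N i j * w j := by
          refine Finset.sum_congr rfl fun j _ => ?_
          rw [norm_mul, Complex.norm_real, Real.norm_eq_abs, abs_of_nonneg (hN i j)]

/-- The shift constant. -/
noncomputable def shiftc (M : Matrix m m ℝ) : ℝ := 1 + ∑ i, |M i i|

lemma shiftc_pos (M : Matrix m m ℝ) : 0 < shiftc M := by
  have : (0:ℝ) ≤ ∑ i, |M i i| := Finset.sum_nonneg fun i _ => abs_nonneg _
  unfold shiftc; linarith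

lemma shiftc_diag (M : Matrix m m ℝ) (i : m) : 0 < M i i + shiftc M := by
  have h1 : |M i i| ≤ ∑ j, |M j j| :=
    Finset.single_le_sum (f := fun j => |M j j|) (fun j _ => abs_nonneg _) (Finset.mem_univ i)
  have h2 : -M i i ≤ |M i i| := neg_le_abs _
  unfold shiftc; linarith

lemma shiftN_apply (M : Matrix m m ℝ) (c : ℝ) (i j : m) :
    (M + c • (1:Matrix m m ℝ)) i j = M i j + (if i = j then c else 0) := by
  by_cases h : i = j <;> simp [Matrix.one_apply, h]

lemma shiftN_nonneg (M : Matrix m m ℝ) (hMetz : ∀ i j, i ≠ j → 0 ≤ M i j) :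
    MNonneg (M + shiftc M • 1) := by
  intro i j
  rw [shiftN_apply]
  by_cases h : i = j
  · subst h; simpa using (shiftc_diag M i).le
  · simpa [h] using hMetz i j h

lemma shiftN_diag_pos (M : Matrix m m ℝ) (i : m) :
    0 < (M + shiftc M • 1) i i := by
  rw [shiftN_apply]; simpa using shiftc_diag M i

lemma shiftN_mulVec (M : Matrix m m ℝ) (c : ℝ) (v : m → ℝ) :
    (M + c • (1:Matrix m m ℝ)) *ᵥ v = M *ᵥ v + c • v := by
  rw [Matrix.add_mulVec, Matrix.smul_mulVec, Matrix.one_mulVec]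

/-- positivity of powers of the shifted matrix along reachability -/
lemma shiftN_pow_pos (M : Matrix m m ℝ) (hMetz : ∀ i j, i ≠ j → 0 ≤ M i j)
    {a b : m} (h : Relation.ReflTransGen (fun x y => x ≠ y ∧ M y x ≠ 0) a b) :
    ∃ k, 0 < ((M + shiftc M • (1 : Matrix m m ℝ)) ^ k) b a := by
  apply path_pow_pos (shiftN_nonneg M hMetz) (shiftN_diag_pos M)
  refine Relation.ReflTransGen.mono (fun x y hxy => ?_) _ _ h
  rw [shiftN_apply]
  rcases hxy with ⟨hne, hMne⟩
  have : 0 ≤ M y x := hMetz y x (Ne.symm hne)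
  simp only [if_neg (Ne.symm hne), add_zero]
  exact lt_of_le_of_ne this (Ne.symm hMne)

/-- Key spectral result for irreducible Metzler matrices. -/
lemma metzler_spectral [Nonempty m] (M : Matrix m m ℝ)
    (hMetz : ∀ i j, i ≠ j → 0 ≤ M i j)
    (hirr : ∀ i j : m, Relation.ReflTransGen (fun a b => a ≠ b ∧ M b a ≠ 0) i j) :
    ∃ (r : ℝ) (v : m → ℝ), (∀ i, 0 < v i) ∧ M *ᵥ v = r • v ∧ IsEigenvalue M (r:ℂ) ∧
      ∀ z : ℂ, IsEigenvalue M z → z.re ≤ r ∧ (z.re = r → z = (r:ℂ)) := by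
  set c := shiftc M with hc
  set N := M + c • (1:Matrix m m ℝ) with hN
  have hNnn : MNonneg N := shiftN_nonneg M hMetz
  have hprim : ∀ i j : m, ∃ k, 0 < (((1 : Matrix m m ℝ) + N) ^ k) i j := by
    intro i j
    obtain ⟨k, hk⟩ := shiftN_pow_pos M hMetz (hirr j i)
    -- (1 + N) ≥ N entrywise and same structure; easier: redo path argument on 1 + N
    have h1 : MNonneg (1 + N) := by
      intro a b
      by_cases h : a = b
      · subst h
        simp only [Matrix.add_apply, Matrix.one_apply_eq]
        exact add_nonneg zero_le_one (hNnn a a)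
      · simp only [Matrix.add_apply, Matrix.one_apply_ne h, zero_add]
        exact hNnn a b
    have h2 : ∀ a, 0 < (1 + N) a a := by
      intro a
      simp only [Matrix.add_apply, Matrix.one_apply_eq]
      exact lt_of_lt_of_le zero_lt_one (le_add_of_nonneg_right (hNnn a a))
    apply path_pow_pos h1 h2
    refine Relation.ReflTransGen.mono (fun x y hxy => ?_) _ _ (hirr j i)
    rcases hxy with ⟨hne, hMne⟩
    have hyx : (1 + N) y x = N y x := by
      simp [Matrix.add_apply, Matrix.one_apply_ne (Ne.symm hne)]
    rw [hyx, hN, shiftN_apply, if_neg (Ne.symm hne), add_zero]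
    exact lt_of_le_of_ne (hMetz y x (Ne.symm hne)) (Ne.symm hMne)
  obtain ⟨ρ, v, hρ0, hv, hNv, hbound⟩ := perron_frobenius N hNnn hprim
  have hvne : v ≠ 0 := by
    intro h
    have := hv (Classical.arbitrary m)
    rw [h] at this
    simp at this
  have h3 : N *ᵥ v = M *ᵥ v + c • v := shiftN_mulVec M c v
  rw [h3] at hNv
  have hMv : M *ᵥ v = (ρ - c) • v := by
    rw [sub_smul, ← hNv]; abel
  refine ⟨ρ - c, v, hv, hMv, isEigenvalue_of_real_vec M (ρ - c) v hvne hMv, ?_⟩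
  · intro z hz
    have hzN : IsEigenvalue N (z + c) := by
      rw [hN, isEigenvalue_add_smul_one]
      simpa using hz
    have hnorm : ‖z + (c:ℂ)‖ ≤ ρ := hbound _ hzN
    have hre : z.re + c ≤ ‖z + (c:ℂ)‖ := by
      have := Complex.re_le_norm (z + c)
      simpa [Complex.add_re, Complex.ofReal_re] using this
    constructor
    · linarith
    · intro hrez
      have hsq : ‖z + (c:ℂ)‖^2 = (z.re + c)^2 + z.im^2 := by
        rw [Complex.sq_norm, Complex.normSq_apply]
        simp only [Complex.add_re, Complex.add_im, Complex.ofReal_re, Complex.ofReal_im,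
          add_zero]
        ring
      have him : z.im = 0 := by
        have h1 : ‖z + (c:ℂ)‖^2 ≤ ρ^2 := by
          have h0 : (0:ℝ) ≤ ‖z + (c:ℂ)‖ := norm_nonneg _
          nlinarith
        rw [hsq, hrez] at h1
        nlinarith
      apply Complex.ext
      · simpa using hrez
      · simpa using him

/-- Solving `M x = -b` with strictly positive solution, for irreducible Metzler `M`
with all eigenvalues having nonpositive real part and `0` not an eigenvalue. -/
lemma subcritical_solve [Nonempty m] (M : Matrix m m ℝ)
    (hMetz : ∀ i j, i ≠ j → 0 ≤ M i j)
    (hirr : ∀ i j : m, Relation.ReflTransGen (fun a b => a ≠ b ∧ M b a ≠ 0) i j)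
    (hle : ∀ z : ℂ, IsEigenvalue M z → z.re ≤ 0)
    (hne0 : ¬ IsEigenvalue M 0)
    (b : m → ℝ) (hb : ∀ i, 0 ≤ b i) (hbne : ∃ i, b i ≠ 0) :
    ∃ x : m → ℝ, (∀ i, 0 < x i) ∧ ∀ i, (M *ᵥ x) i + b i = 0 := by
  obtain ⟨r, v, hv, hMv, hrEig, hbound⟩ := metzler_spectral M hMetz hirr
  have hr0 : r ≤ 0 := by simpa using hle (r:ℂ) hrEig
  have hrne : r ≠ 0 := by
    intro h
    rw [h] at hrEig
    exact hne0 (by simpa using hrEig)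
  have hrneg : r < 0 := lt_of_le_of_ne hr0 hrne
  set c := shiftc M with hcdef
  have hc0 : 0 < c := shiftc_pos M
  set N := M + c • (1:Matrix m m ℝ) with hNdef
  have hNnn : MNonneg N := shiftN_nonneg M hMetz
  have hNv : N *ᵥ v = (r + c) • v := by
    rw [hNdef, shiftN_mulVec, hMv, ← add_smul]
  set ρ := r + c with hρdef
  have hρc : ρ < c := by simp [hρdef]; linarith
  have hρ0 : 0 ≤ ρ := by
    obtain i₀ : m := Classical.arbitrary m
    have h1 : 0 ≤ (N *ᵥ v) i₀ := Finset.sum_nonneg fun j _ => mul_nonneg (hNnn i₀ j) (hv j).le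
    rw [hNv] at h1
    simp only [Pi.smul_apply, smul_eq_mul] at h1
    nlinarith [hv i₀]
  -- powers of N on v
  have hNkv : ∀ k, (N ^ k) *ᵥ v = ρ ^ k • v := by
    intro k
    induction k with
    | zero => simp
    | succ k ih =>
      rw [pow_succ', ← Matrix.mulVec_mulVec, ih, Matrix.mulVec_smul, hNv, smul_smul, pow_succ']
      rw [mul_comm]
  -- bound on entries of N^k *ᵥ b
  set C : ℝ := Finset.univ.sup' Finset.univ_nonempty (fun j => b j / v j) with hC
  have hbCv : ∀ j, b j ≤ C * v j := by
    intro j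
    have h1 : b j / v j ≤ C := Finset.le_sup' (fun j => b j / v j) (Finset.mem_univ j)
    calc b j = (b j / v j) * v j := (div_mul_cancel₀ (b j) (hv j).ne').symm
      _ ≤ C * v j := mul_le_mul_of_nonneg_right h1 (hv j).le
  have hC0 : 0 ≤ C := by
    obtain ⟨j⟩ : Nonempty m := inferInstance
    exact le_trans (div_nonneg (hb j) (hv j).le)
      (Finset.le_sup' (fun j => b j / v j) (Finset.mem_univ j))
  have hkey : ∀ k i, ((N ^ k) *ᵥ b) i ≤ ρ ^ k * (C * v i) := by
    intro k i
    have h1 : ((N ^ k) *ᵥ b) i ≤ ((N ^ k) *ᵥ (fun j => C * v j)) i := by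
      apply Finset.sum_le_sum
      intro j _
      exact mul_le_mul_of_nonneg_left (hbCv j) ((hNnn.pow k) i j)
    have h2 : ((N ^ k) *ᵥ (fun j => C * v j)) i = C * (ρ ^ k * v i) := by
      have h3 : (fun j => C * v j) = C • v := by funext j; simp
      rw [h3, Matrix.mulVec_smul, hNkv k]
      simp [smul_smul]
    rw [h2] at h1
    linarith [h1]
  have hknonneg : ∀ k i, 0 ≤ ((N ^ k) *ᵥ b) i := fun k i =>
    Finset.sum_nonneg fun j _ => mul_nonneg ((hNnn.pow k) i j) (hb j)
  -- the series
  set a : m → ℕ → ℝ := fun i k => ((N ^ k) *ᵥ b) i / c ^ (k+1) with ha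
  have ha0 : ∀ i k, 0 ≤ a i k := fun i k =>
    div_nonneg (hknonneg k i) (pow_nonneg hc0.le _)
  have hq0 : 0 ≤ ρ / c := div_nonneg hρ0 hc0.le
  have hq1 : ρ / c < 1 := (div_lt_one hc0).mpr hρc
  have hsum : ∀ i, Summable (a i) := by
    intro i
    refine Summable.of_nonneg_of_le (ha0 i) (fun k => ?_)
      ((summable_geometric_of_lt_one hq0 hq1).mul_left (C * v i / c))
    calc a i k = ((N ^ k) *ᵥ b) i * (c ^ (k+1))⁻¹ := by simp only [ha]; rw [div_eq_mul_inv]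
      _ ≤ (ρ ^ k * (C * v i)) * (c ^ (k+1))⁻¹ :=
          mul_le_mul_of_nonneg_right (hkey k i) (inv_nonneg.mpr (pow_pos hc0 _).le)
      _ = (C * v i / c) * (ρ/c)^k := by
          rw [div_pow]
          rw [div_eq_mul_inv, div_eq_mul_inv, pow_succ, mul_inv]
          ring
  set x : m → ℝ := fun i => ∑' k, a i k with hx
  have hxpos : ∀ i, 0 < x i := by
    obtain ⟨j₁, hj₁⟩ := hbne
    intro i
    have hdiagN : ∀ i, 0 < N i i := by
      intro i
      rw [hNdef, shiftN_apply]
      simpa using shiftc_diag M i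
    have hpath : ∃ k, 0 < (N ^ k) i j₁ := by
      apply path_pow_pos hNnn hdiagN
      refine Relation.ReflTransGen.mono (fun p q hpq => ?_) _ _ (hirr j₁ i)
      rw [hNdef, shiftN_apply, if_neg (Ne.symm hpq.1), add_zero]
      exact lt_of_le_of_ne (hMetz q p (Ne.symm hpq.1)) (Ne.symm hpq.2)
    obtain ⟨k, hk⟩ := hpath
    have h1 : 0 < a i k := by
      apply div_pos ?_ (pow_pos hc0 _)
      have h2 : (N^k) i j₁ * b j₁ ≤ ((N^k) *ᵥ b) i :=
        Finset.single_le_sum (f := fun j => (N^k) i j * b j)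
          (fun j _ => mul_nonneg ((hNnn.pow k) i j) (hb j)) (Finset.mem_univ j₁)
      have h3 : 0 < (N^k) i j₁ * b j₁ :=
        mul_pos hk (lt_of_le_of_ne (hb j₁) (Ne.symm hj₁))
      linarith
    exact lt_of_lt_of_le h1 (Summable.le_tsum (hsum i) k (fun k' _ => ha0 i k'))
  refine ⟨x, hxpos, fun i => ?_⟩
  have hNx : (N *ᵥ x) i = c * x i - b i := by
    have h1 : (N *ᵥ x) i = ∑ j, N i j * x j := rfl
    have h2 : ∀ j, N i j * x j = ∑' k, N i j * a j k := fun j => by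
      rw [hx]; exact (tsum_mul_left).symm
    have h3 : ∑ j, N i j * x j = ∑' k, ∑ j, N i j * a j k := by
      rw [Finset.sum_congr rfl (fun j _ => h2 j)]
      exact (Summable.tsum_finsetSum (fun j _ => (hsum j).mul_left _)).symm
    have h4 : ∀ k, ∑ j, N i j * a j k = c * a i (k+1) := by
      intro k
      have h5 : ∑ j, N i j * a j k = (∑ j, N i j * ((N^k) *ᵥ b) j) / c^(k+1) := by
        rw [Finset.sum_div]
        exact Finset.sum_congr rfl fun j _ => by simp only [ha]; ring
      have h6 : ∑ j, N i j * ((N^k) *ᵥ b) j = ((N^(k+1)) *ᵥ b) i := by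
        rw [pow_succ', ← Matrix.mulVec_mulVec]
        simp [Matrix.mulVec, dotProduct]
      rw [h5, h6, ha]
      have hcne : (c:ℝ) ≠ 0 := hc0.ne'
      have hgen : ∀ X : ℝ, c * (X / c^(k+1+1)) = X / c^(k+1) := by
        intro X
        rw [pow_succ, mul_div_assoc', mul_comm c X, mul_div_mul_right _ _ hcne]
      rw [hgen]
    have h7 := Summable.tsum_eq_zero_add (hsum i)
    have h8 : a i 0 = b i / c := by
      simp only [ha]
      simp [Matrix.one_mulVec]
    have hxi : x i = ∑' k, a i k := rfl
    have h9 : ∑' k, a i (k+1) = x i - b i / c := by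
      rw [hxi, h7, h8]
      ring
    rw [h1, h3, tsum_congr h4, tsum_mul_left, h9, mul_sub,
      mul_div_cancel₀ _ hc0.ne']
  have h10 : (N *ᵥ x) i = (M *ᵥ x) i + c * x i := by
    rw [hNdef, shiftN_mulVec]
    simp
  rw [h10] at hNx
  linarith


end AuxSpectral

section Graph

variable {n : ℕ} (A : Matrix (Fin n) (Fin n) ℝ)

lemma reaches_refl (i : Fin n) : Reaches A i i := Relation.ReflTransGen.refl

lemma reaches_trans {i j k : Fin n} (h1 : Reaches A i j) (h2 : Reaches A j k) :
    Reaches A i k := Relation.ReflTransGen.trans h1 h2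

lemma mutual_refl (i : Fin n) : Mutual A i i := ⟨reaches_refl A i, reaches_refl A i⟩

lemma mutual_symm {i j : Fin n} (h : Mutual A i j) : Mutual A j i := ⟨h.2, h.1⟩

lemma mutual_trans {i j k : Fin n} (h1 : Mutual A i j) (h2 : Mutual A j k) :
    Mutual A i k := ⟨reaches_trans A h1.1 h2.1, reaches_trans A h2.2 h1.2⟩

/-- crossing lemma -/
lemma crossing {C : Set (Fin n)} {a b : Fin n} (h : Reaches A a b) :
    a ∉ C → b ∈ C → ∃ u l, Reaches A a u ∧ Edge A u l ∧ u ∉ C ∧ l ∈ C := by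
  induction h with
  | refl => intro ha hb; exact absurd hb ha
  | @tail x y hax hxy ih =>
    intro ha hy
    by_cases hx : x ∈ C
    · exact ih ha hx
    · exact ⟨x, y, hax, hxy, hx, hy⟩

/-- a path between two vertices of an SCC stays in the SCC -/
lemma reaches_within (i₀ : Fin n) {i j : Fin n}
    (hj : Mutual A i₀ j) (h : Reaches A i j) (hi : Mutual A i₀ i) :
    Relation.ReflTransGen
      (fun a b : {j | Mutual A i₀ j} => a ≠ b ∧ (block A {j | Mutual A i₀ j}) b a ≠ 0)
      ⟨i, hi⟩ ⟨j, hj⟩ := by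
  induction h using Relation.ReflTransGen.head_induction_on with
  | refl => exact Relation.ReflTransGen.refl
  | @head a c hac hcj ih =>
    have hc : Mutual A i₀ c := by
      constructor
      · exact reaches_trans A hi.1 (Relation.ReflTransGen.single hac)
      · exact reaches_trans A hcj hj.2
    refine Relation.ReflTransGen.head ?_ (ih hc)
    constructor
    · intro hfalse
      exact hac.1 (congrArg Subtype.val hfalse)
    · exact hac.2

lemma scc_block_irred (i₀ : Fin n) :
    ∀ a b : ({j | Mutual A i₀ j} : Set (Fin n)),
      Relation.ReflTransGen
        (fun a b : {j | Mutual A i₀ j} => a ≠ b ∧ (block A {j | Mutual A i₀ j}) b a ≠ 0)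
        a b := by
  rintro ⟨a, ha⟩ ⟨b, hb⟩
  have hab : Reaches A a b := reaches_trans A ha.2 hb.1
  exact reaches_within A i₀ hb hab ha

lemma scc_block_irred' (i₀ : Fin n) (T : Set (Fin n)) (hT : T = {j | Mutual A i₀ j}) :
    ∀ a b : ↥T, Relation.ReflTransGen
      (fun a b : ↥T => a ≠ b ∧ (block A T) b a ≠ 0) a b := by
  subst hT
  exact scc_block_irred A i₀

end Graph

lemma sum_mul_dite_subtype {n : ℕ} (C : Set (Fin n)) (f : Fin n → ℝ) (g : ↥C → ℝ) :
    ∑ j : Fin n, f j * (if h : j ∈ C then g ⟨j, h⟩ else 0) = ∑ j : ↥C, f j.1 * g j := by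
  classical
  rw [← Finset.sum_filter_of_ne
    (p := fun j => j ∈ C) (f := fun j => f j * (if h : j ∈ C then g ⟨j, h⟩ else 0))
    (fun x _ hx => by
      by_contra hc
      apply hx
      simp [hc])]
  rw [Finset.sum_subtype (p := fun j => j ∈ C) _ (by simp)]
  exact Finset.sum_congr rfl fun j _ => by rw [dif_pos j.2]


/-- for a final critical SCC `S` (no super-critical SCCs, and no other
critical SCC downstream of `S`), there is a nonnegative fixed point which is strictly
positive exactly on the vertices reachable from `S`. -/
theorem exists_fixedPoint_positive_on_reachable (n : ℕ) (hn : 1 ≤ n)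
    (A : Matrix (Fin n) (Fin n) ℝ) (hA : Metzler A)
    (hsup : ∀ S : Set (Fin n), IsSCC A S → ¬ SuperCritical A S)
    (S : Set (Fin n)) (hS : IsSCC A S) (hcrit : Critical A S)
    (hfinal : ∀ T : Set (Fin n), IsSCC A T → Critical A T → T ≠ S → ¬ Upstream A S T) :
    ∃ m : Fin n → ℝ, NonnegFixedPoint A m ∧
      ∀ i : Fin n, (0 < m i ↔ ∃ s ∈ S, Reaches A s i) := by
  classical
  obtain ⟨i₀, hSdef⟩ := hS
  have hi₀S : i₀ ∈ S := by rw [hSdef]; exact mutual_refl A i₀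
  set R : Set (Fin n) := {i | ∃ s ∈ S, Reaches A s i} with hRdef
  have hSR : S ⊆ R := fun s hs => ⟨s, hs, reaches_refl A s⟩
  have hRclosed : ∀ i ∈ R, ∀ j, Reaches A i j → j ∈ R := by
    rintro i ⟨s, hs, hsi⟩ j hij
    exact ⟨s, hs, reaches_trans A hsi hij⟩
  have hSmem : ∀ i ∈ S, Mutual A i₀ i := fun i hi => by rwa [hSdef] at hi
  have hSreach : ∀ i ∈ S, ∀ j ∈ R, Reaches A i j := by
    rintro i hi j ⟨s, hs, hsj⟩
    exact reaches_trans A (reaches_trans A (hSmem i hi).2 (hSmem s hs).1) hsj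
  -- main induction
  have main : ∀ (N : ℕ) (U : Set (Fin n)), U.ncard ≤ N → S ⊆ U → U ⊆ R →
      (∀ j ∈ U, ∀ i ∈ R, Reaches A i j → i ∈ U) →
      ∃ x : Fin n → ℝ, (∀ i, 0 ≤ x i) ∧ (∀ i, 0 < x i ↔ i ∈ U) ∧
        (∀ i ∈ U, (A *ᵥ x) i = 0) := by
    intro N
    induction N with
    | zero =>
      intro U hcard hSU hUR hclosed
      have : U = ∅ := by
        rw [← Set.ncard_eq_zero (Set.toFinite U)]
        omega
      rw [this] at hSU
      exact absurd (hSU hi₀S) (Set.notMem_empty i₀)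
    | succ N ih =>
      intro U hcard hSU hUR hclosed
      by_cases hUS : U ⊆ S
      · -- base case : U = S, Perron vector of the critical block
        have hUeq : U = S := le_antisymm hUS hSU
        subst hUeq
        haveI : Nonempty ↥U := ⟨⟨i₀, hi₀S⟩⟩
        have hMetz : ∀ i j : ↥U, i ≠ j → 0 ≤ (block A U) i j := by
          intro i j hij
          exact hA i.1 j.1 (fun h => hij (Subtype.ext h))
        have hirr : ∀ a b : ↥U, Relation.ReflTransGen
            (fun a b : ↥U => a ≠ b ∧ (block A U) b a ≠ 0) a b :=
          scc_block_irred' A i₀ U hSdef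
        obtain ⟨r, v, hv, hMv, hrE, hbd⟩ := metzler_spectral (block A U) hMetz hirr
        have hr0 : r = 0 := by
          have h1 : r ≤ 0 := by simpa using hcrit.2 (r:ℂ) hrE
          have h2 : (0:ℝ) ≤ r := by simpa using (hbd 0 hcrit.1).1
          linarith
        rw [hr0, zero_smul] at hMv
        refine ⟨fun i => if h : i ∈ U then v ⟨i, h⟩ else 0, ?_, ?_, ?_⟩
        · intro i
          by_cases h : i ∈ U <;> simp [h, (hv _).le]
        · intro i
          by_cases h : i ∈ U <;> simp [h, hv]
        · intro i hi
          have h1 : (A *ᵥ fun i => if h : i ∈ U then v ⟨i, h⟩ else 0) i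
              = ∑ j : ↥U, A i j.1 * v j := by
            show ∑ j, A i j * _ = _
            exact sum_mul_dite_subtype U (fun j => A i j) v
          rw [h1]
          have h2 := congrFun hMv ⟨i, hi⟩
          simpa [Matrix.mulVec, dotProduct, block] using h2
      · -- inductive step : peel off a sink SCC C of U not equal to S
        obtain ⟨w₀, hw₀U, hw₀S⟩ := Set.not_subset.mp hUS
        set F : Finset (Fin n) := Finset.univ.filter (fun i => i ∈ U ∧ i ∉ S) with hF
        have hFne : F.Nonempty := ⟨w₀, by simp [hF, hw₀U, hw₀S]⟩
        set f : Fin n → ℕ := fun i => {j | j ∈ U ∧ Reaches A i j}.ncard with hf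
        obtain ⟨istar, histarF, hmin⟩ := F.exists_min_image f hFne
        have histarU : istar ∈ U := by simp [hF] at histarF; exact histarF.1
        have histarS : istar ∉ S := by simp [hF] at histarF; exact histarF.2
        set C : Set (Fin n) := {j | Mutual A istar j} with hC
        have histarC : istar ∈ C := mutual_refl A istar
        have histarR : istar ∈ R := hUR histarU
        have hCR : C ⊆ R := fun j hj => hRclosed istar histarR j hj.1
        have hCU : C ⊆ U := fun j hj => hclosed istar histarU j (hCR hj) hj.2
        have hCS : ∀ j ∈ C, j ∉ S := by
          intro j hj hjS
          exact histarS (by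
            rw [hSdef]
            exact mutual_trans A (hSmem j hjS) (mutual_symm A hj))
        have hsink : ∀ l ∈ U, Reaches A istar l → l ∈ C := by
          intro l hlU hreach
          by_contra hlC
          have hnotback : ¬ Reaches A l istar := fun h => hlC ⟨hreach, h⟩
          by_cases hlS : l ∈ S
          · exact hnotback (hSreach l hlS istar histarR)
          · have hlF : l ∈ F := by simp [hF, hlU, hlS]
            have hsubset : {j | j ∈ U ∧ Reaches A l j} ⊂ {j | j ∈ U ∧ Reaches A istar j} := by
              constructor
              · rintro j ⟨hjU, hlj⟩
                exact ⟨hjU, reaches_trans A hreach hlj⟩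
              · intro hsup2
                exact hnotback (hsup2 ⟨histarU, reaches_refl A istar⟩).2
            have := Set.ncard_lt_ncard hsubset (Set.toFinite _)
            have := hmin l hlF
            simp only [hf] at this
            omega
        -- the smaller set U'
        set U' : Set (Fin n) := U \ C with hU'
        have hssub : U' ⊂ U := by
          constructor
          · exact Set.diff_subset
          · intro hsup2
            exact (hsup2 histarU).2 histarC
        have hcard' : U'.ncard ≤ N := by
          have := Set.ncard_lt_ncard hssub (Set.toFinite U)
          omega
        have hSU' : S ⊆ U' := fun s hs => ⟨hSU hs, fun hsC => hCS s hsC hs⟩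
        have hU'R : U' ⊆ R := fun i hi => hUR hi.1
        have hclosed' : ∀ j ∈ U', ∀ i ∈ R, Reaches A i j → i ∈ U' := by
          rintro j ⟨hjU, hjC⟩ i hiR hij
          refine ⟨hclosed j hjU i hiR hij, fun hiC => ?_⟩
          exact hjC (hsink j hjU (reaches_trans A hiC.1 hij))
        obtain ⟨x', hx'0, hx'pos, hx'eq⟩ := ih U' hcard' hSU' hU'R hclosed'
        have hx'C : ∀ j ∈ C, x' j = 0 := by
          intro j hj
          have : ¬ (0 < x' j) := fun h => ((hx'pos j).mp h).2 hj
          linarith [hx'0 j, not_lt.mp this]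
        -- solve on the block C
        haveI : Nonempty ↥C := ⟨⟨istar, histarC⟩⟩
        have hMetz : ∀ i j : ↥C, i ≠ j → 0 ≤ (block A C) i j := by
          intro i j hij
          exact hA i.1 j.1 (fun h => hij (Subtype.ext h))
        have hirr : ∀ a b : ↥C, Relation.ReflTransGen
            (fun a b : ↥C => a ≠ b ∧ (block A C) b a ≠ 0) a b :=
          scc_block_irred' A istar C hC
        have hCscc : IsSCC A C := ⟨istar, rfl⟩
        have hle : ∀ z : ℂ, IsEigenvalue (block A C) z → z.re ≤ 0 := by
          intro z hz
          by_contra hgt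
          exact hsup C hCscc ⟨z, hz, lt_of_not_ge fun h => hgt (by linarith)⟩
        have hne0 : ¬ IsEigenvalue (block A C) 0 := by
          intro h0
          have hCcrit : Critical A C := ⟨h0, hle⟩
          have hCneS : C ≠ S := fun h => histarS (h ▸ histarC)
          exact hfinal C hCscc hCcrit hCneS
            ⟨i₀, hi₀S, istar, histarC, hSreach i₀ hi₀S istar histarR⟩
        set b : ↥C → ℝ := fun i => ∑ j, A i.1 j * x' j with hb
        have hbterm : ∀ (i : ↥C) (j : Fin n), 0 ≤ A i.1 j * x' j := by
          intro i j
          by_cases hjC : j ∈ C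
          · rw [hx'C j hjC, mul_zero]
          · have hne : i.1 ≠ j := fun h => hjC (h ▸ i.2)
            exact mul_nonneg (hA i.1 j hne) (hx'0 j)
        have hb0 : ∀ i, 0 ≤ b i := fun i => Finset.sum_nonneg fun j _ => hbterm i j
        have hbne : ∃ i, b i ≠ 0 := by
          have hi₀C : i₀ ∉ C := fun h => hCS i₀ h hi₀S
          obtain ⟨u, l, h_reach_u, hedge, huC, hlC⟩ :=
            crossing A (hSreach i₀ hi₀S istar histarR) hi₀C histarC
          have huR : u ∈ R := hRclosed i₀ (hSR hi₀S) u h_reach_u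
          have huU : u ∈ U := hclosed l (hCU hlC) u huR (Relation.ReflTransGen.single hedge)
          have huU' : u ∈ U' := ⟨huU, huC⟩
          have hxu : 0 < x' u := (hx'pos u).mpr huU'
          have hAlu : 0 < A l u :=
            lt_of_le_of_ne (hA l u (Ne.symm hedge.1)) (Ne.symm hedge.2)
          refine ⟨⟨l, hlC⟩, ?_⟩
          have hterm : 0 < A l u * x' u := mul_pos hAlu hxu
          have hsum : A l u * x' u ≤ b ⟨l, hlC⟩ :=
            Finset.single_le_sum (f := fun j => A l j * x' j)
              (fun j _ => hbterm ⟨l, hlC⟩ j) (Finset.mem_univ u)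
          exact ne_of_gt (lt_of_lt_of_le hterm hsum)
        obtain ⟨y, hy, hyeq⟩ := subcritical_solve (block A C) hMetz hirr hle hne0 b hb0 hbne
        -- assemble
        set Y : Fin n → ℝ := fun j => if h : j ∈ C then y ⟨j, h⟩ else 0 with hY
        refine ⟨fun i => x' i + Y i, ?_, ?_, ?_⟩
        · intro i
          by_cases h : i ∈ C <;> simp [hY, h, (hy _).le, hx'0 i, add_nonneg, (hx'0 i)]
        · intro i
          by_cases h : i ∈ C
          · have : x' i = 0 := hx'C i h
            simp only [hY, this, dif_pos h, zero_add]
            constructor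
            · intro _; exact hCU h
            · intro _; exact hy _
          · simp only [hY, dif_neg h, add_zero]
            rw [hx'pos i]
            constructor
            · intro h1; exact h1.1
            · intro h1; exact ⟨h1, h⟩
        · intro i hiU
          have hsplit : (A *ᵥ fun i => x' i + Y i) i = (A *ᵥ x') i + (A *ᵥ Y) i := by
            have : (fun i => x' i + Y i) = x' + Y := rfl
            rw [this, Matrix.mulVec_add]
            simp
          rw [hsplit]
          have hAY : (A *ᵥ Y) i = ∑ j : ↥C, A i j.1 * y j := by
            show ∑ j, A i j * Y j = _
            exact sum_mul_dite_subtype C (fun j => A i j) y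
          by_cases hiC : i ∈ C
          · -- i in C : (A x') i = b i, (A Y) i = (M y) i, sum = 0
            have h1 : (A *ᵥ x') i = b ⟨i, hiC⟩ := rfl
            have h2 : (A *ᵥ Y) i = ((block A C) *ᵥ y) ⟨i, hiC⟩ := by
              rw [hAY]
              rfl
            rw [h1, h2]
            linarith [hyeq ⟨i, hiC⟩]
          · -- i in U' : both terms vanish
            have hiU' : i ∈ U' := ⟨hiU, hiC⟩
            have h1 : (A *ᵥ x') i = 0 := hx'eq i hiU'
            have h2 : (A *ᵥ Y) i = 0 := by
              rw [hAY]
              apply Finset.sum_eq_zero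
              intro j _
              have hAij : A i j.1 = 0 := by
                by_contra hne
                have hne2 : j.1 ≠ i := fun h => hiC (h ▸ j.2)
                have hedge : Edge A j.1 i := ⟨hne2, hne⟩
                have : i ∈ C := hsink i hiU
                  (reaches_trans A j.2.1 (Relation.ReflTransGen.single hedge))
                exact hiC this
              rw [hAij, zero_mul]
            rw [h1, h2, add_zero]
  -- conclude with U = R
  have hRR : ∀ j ∈ R, ∀ i ∈ R, Reaches A i j → i ∈ R := fun j _ i hi _ => hi
  obtain ⟨x, hx0, hxpos, hxeq⟩ := main R.ncard R le_rfl hSR (fun i hi => hi) hRR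
  refine ⟨x, ⟨hx0, ?_⟩, fun i => by rw [hxpos i]; rfl⟩
  funext i
  by_cases hiR : i ∈ R
  · exact hxeq i hiR
  · show ∑ j, A i j * x j = 0
    apply Finset.sum_eq_zero
    intro j _
    by_cases hxj : x j = 0
    · rw [hxj, mul_zero]
    · have hjR : j ∈ R := (hxpos j).mp (lt_of_le_of_ne (hx0 j) (Ne.symm hxj))
      have hne : j ≠ i := fun h => hiR (h ▸ hjR)
      by_cases hAij : A i j = 0
      · rw [hAij, zero_mul]
      · exact absurd (hRclosed j hjR i (Relation.ReflTransGen.single ⟨hne, hAij⟩)) hiR
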